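/- In Q_4, for any family of exactly 2 vertex-disjoint edges (each an edge of Q_4) removed, the remaining graph is connected and has diameter at most 5. -/

import Mathlib

open SimpleGraph

/-- The `n`-dimensional hypercube: vertices are `Fin n → Bool`,
adjacent iff Hamming distance is `1`. -/
def Q (n : ℕ) : SimpleGraph (Fin n → Bool) where
  Adj u v := hammingDist u v = 1
  symm := ⟨fun (u v : Fin n → Bool) (h : hammingDist u v = 1) => show hammingDist v u = 1 by rwa [hammingDist_comm]⟩
  loopless := ⟨fun u (h : hammingDist u u = 1) => by simp [hammingDist_self] at h⟩

/-- Flip the `i`-th bit of `x`. -/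
def flipBit {n : ℕ} (x : Fin n → Bool) (i : Fin n) : Fin n → Bool :=
  Function.update x i (!x i)

/-- `S` is a subcube of dimension exactly `m` (fixing `n - m` coordinates). -/
def IsSubcube {n : ℕ} (m : ℕ) (S : Set (Fin n → Bool)) : Prop :=
  ∃ A : Finset (Fin n), A.card = n - m ∧ ∃ p : Fin n → Bool,
    S = {x | ∀ i ∈ A, x i = p i}

/-- `S` is a subcube of dimension at most `m` (fixing at least `n - m` coordinates). -/
def IsSubcubeLe {n : ℕ} (m : ℕ) (S : Set (Fin n → Bool)) : Prop :=
  ∃ A : Finset (Fin n), n - m ≤ A.card ∧ ∃ p : Fin n → Bool,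
    S = {x | ∀ i ∈ A, x i = p i}

/-! ### auxiliary machinery -/

instance {n : ℕ} : DecidableRel (Q n).Adj := fun u v =>
  inferInstanceAs (Decidable (hammingDist u v = 1))

/-- numeric encoding of vertices -/
def dec (m : ℕ) : Fin 4 → Bool := fun i => m.testBit i.val

def enc (x : Fin 4 → Bool) : ℕ :=
  (if x 0 then 1 else 0) + (if x 1 then 2 else 0) + (if x 2 then 4 else 0) + (if x 3 then 8 else 0)

lemma dec_enc : ∀ v : Fin 4 → Bool, dec (enc v) = v := by decide
lemma enc_lt : ∀ v : Fin 4 → Bool, enc v < 16 := by decide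
lemma enc_dec : ∀ m : Fin 16, enc (dec m.val) = m.val := by decide

def verts : List ℕ := [0,1,2,3,4,5,6,7,8,9,10,11,12,13,14,15]

def nadjb (m n : ℕ) : Bool := (m ^^^ n == 1) || (m ^^^ n == 2) || (m ^^^ n == 4) || (m ^^^ n == 8)

def stepL (al cur : List ℕ) : List ℕ :=
  cur ++ al.filter (fun y => !cur.contains y && cur.any (fun z => nadjb z y))

def ballL (al : List ℕ) (k : ℕ) (x : ℕ) : List ℕ := (stepL al)^[k] [x]

def checkconf (a b c d : ℕ) : Bool :=
  let al := verts.filter (fun x => x != a && x != b && x != c && x != d)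
  al.all (fun x => al.all (fun y => (ballL al 5 x).contains y))

lemma enc_mem_verts : ∀ v : Fin 4 → Bool, enc v ∈ verts := by decide
lemma verts_lt : ∀ n ∈ verts, n < 16 := by decide
lemma nadjb_adj : ∀ z y : Fin 16, nadjb z.val y.val = true → (Q 4).Adj (dec z.val) (dec y.val) := by decide
lemma adj_nadjb : ∀ u v : Fin 4 → Bool, (Q 4).Adj u v → nadjb (enc u) (enc v) = true := by decide
lemma find_swap : ∀ b0 : Fin 4 → Bool, (Q 4).Adj (dec 0) b0 →
    ∃ i : Fin 4, b0 ∘ ⇑(Equiv.swap (0 : Fin 4) i) = dec 1 ∧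
      (dec 0) ∘ ⇑(Equiv.swap (0 : Fin 4) i) = dec 0 := by decide

lemma exists_fifth (A B C D : Fin 16) : ∃ X : Fin 16,
    X ≠ A ∧ X ≠ B ∧ X ≠ C ∧ X ≠ D := by
  by_contra h
  push_neg at h
  have hsub : (Finset.univ : Finset (Fin 16)) ⊆ {A, B, C, D} := by
    intro X _
    by_cases h1 : X = A; · simp [h1]
    by_cases h2 : X = B; · simp [h2]
    by_cases h3 : X = C; · simp [h3]
    simp [h X h1 h2 h3]
  have hcard := Finset.card_le_card hsub
  have h4 : ({A, B, C, D} : Finset (Fin 16)).card ≤ 4 := by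
    apply le_trans (Finset.card_insert_le _ _)
    apply Nat.succ_le_succ
    apply le_trans (Finset.card_insert_le _ _)
    apply Nat.succ_le_succ
    apply le_trans (Finset.card_insert_le _ _)
    simp
  simp [Finset.card_univ] at hcard
  omega

lemma ballL_subset (al : List ℕ) : ∀ (k : ℕ) (x : ℕ), x ∈ al →
    ∀ y ∈ ballL al k x, y ∈ al := by
  intro k
  induction k with
  | zero =>
    intro x hx y hy
    rw [ballL, Function.iterate_zero_apply, List.mem_singleton] at hy
    subst hy; exact hx
  | succ k ih =>
    intro x hx y hy
    rw [ballL, Function.iterate_succ_apply'] at hy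
    rw [stepL, List.mem_append] at hy
    rcases hy with hy | hy
    · exact ih x hx y hy
    · exact List.mem_of_mem_filter hy

lemma ballL_walk (al : List ℕ) (hal : ∀ n ∈ al, n < 16) : ∀ (k : ℕ) (x : ℕ), x ∈ al →
    ∀ y ∈ ballL al k x, ∃ p : (Q 4).Walk (dec x) (dec y),
      p.length ≤ k ∧ ∀ z ∈ p.support, ∃ w ∈ al, z = dec w := by
  intro k
  induction k with
  | zero =>
    intro x hx y hy
    rw [ballL, Function.iterate_zero_apply, List.mem_singleton] at hy
    subst hy
    exact ⟨.nil, by simp, fun z hz => ⟨_, hx, by simpa using hz⟩⟩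
  | succ k ih =>
    intro x hx y hy
    rw [ballL, Function.iterate_succ_apply'] at hy
    rw [stepL, List.mem_append] at hy
    rcases hy with hy | hy
    · obtain ⟨p, hl, hs⟩ := ih x hx y hy
      exact ⟨p, hl.trans (Nat.le_succ k), hs⟩
    · rw [List.mem_filter] at hy
      obtain ⟨hyal, hcond⟩ := hy
      rw [Bool.and_eq_true, List.any_eq_true] at hcond
      obtain ⟨-, z, hz, hzy⟩ := hcond
      obtain ⟨p, hl, hs⟩ := ih x hx z hz
      have hzal : z ∈ al := ballL_subset al k x hx z hz
      have hadj : (Q 4).Adj (dec z) (dec y) :=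
        nadjb_adj ⟨z, hal z hzal⟩ ⟨y, hal y hyal⟩ hzy
      refine ⟨p.concat hadj, ?_, ?_⟩
      · rw [Walk.length_concat]; omega
      · intro w hw
        rw [Walk.support_concat, List.mem_append] at hw
        rcases hw with hw | hw
        · exact hs w hw
        · simp at hw; subst hw; exact ⟨y, hyal, rfl⟩

/-- the key combinatorial property of a removed quadruple -/
def W (a b c d : Fin 4 → Bool) : Prop := ∀ x y : Fin 4 → Bool,
    x ≠ a → x ≠ b → x ≠ c → x ≠ d → y ≠ a → y ≠ b → y ≠ c → y ≠ d →
    ∃ p : (Q 4).Walk x y, p.length ≤ 5 ∧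
      ∀ z ∈ p.support, z ≠ a ∧ z ≠ b ∧ z ≠ c ∧ z ≠ d

lemma bridge : ∀ A B C D : Fin 16, checkconf A.val B.val C.val D.val = true →
    W (dec A.val) (dec B.val) (dec C.val) (dec D.val) := by
  intro A B C D h x y hxa hxb hxc hxd hya hyb hyc hyd
  set al := verts.filter (fun n => n != A.val && n != B.val && n != C.val && n != D.val) with hal
  have hmem : ∀ v : Fin 4 → Bool, v ≠ dec A.val → v ≠ dec B.val → v ≠ dec C.val →
      v ≠ dec D.val → enc v ∈ al := by
    intro v h1 h2 h3 h4
    rw [hal, List.mem_filter]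
    refine ⟨enc_mem_verts v, ?_⟩
    simp only [Bool.and_eq_true, bne_iff_ne, ne_eq]
    refine ⟨⟨⟨fun hh => h1 ?_, fun hh => h2 ?_⟩, fun hh => h3 ?_⟩, fun hh => h4 ?_⟩ <;>
      rw [← dec_enc v, hh] <;> rfl
  have hal16 : ∀ n ∈ al, n < 16 := fun n hn => verts_lt n (List.mem_of_mem_filter hn)
  have hinj : ∀ w ∈ al, ∀ (M : Fin 16), w ≠ M.val → dec w ≠ dec M.val := by
    intro w hw M hne heq
    apply hne
    have : enc (dec w) = w := enc_dec ⟨w, hal16 w hw⟩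
    rw [← this, heq, enc_dec]
  have hxal := hmem x hxa hxb hxc hxd
  have hyal := hmem y hya hyb hyc hyd
  rw [checkconf, List.all_eq_true] at h
  have h2 := h (enc x) hxal
  rw [List.all_eq_true] at h2
  have h3 := h2 (enc y) hyal
  have hymem : enc y ∈ ballL al 5 (enc x) := by simpa using h3
  obtain ⟨p, hl, hs⟩ := ballL_walk al hal16 5 (enc x) hxal (enc y) hymem
  refine ⟨(p.copy (dec_enc x) (dec_enc y)), by simpa using hl, ?_⟩
  intro z hz
  rw [Walk.support_copy] at hz
  obtain ⟨w, hwal, rfl⟩ := hs z hz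
  have hw := hwal
  rw [hal, List.mem_filter, Bool.and_eq_true, Bool.and_eq_true, Bool.and_eq_true,
    bne_iff_ne, bne_iff_ne, bne_iff_ne, bne_iff_ne] at hw
  obtain ⟨-, ⟨⟨hwa, hwb⟩, hwc⟩, hwd⟩ := hw
  exact ⟨hinj w hwal A hwa, hinj w hwal B hwb, hinj w hwal C hwc, hinj w hwal D hwd⟩

/-! ### hypercube automorphisms -/

lemma hamming_xor (t u v : Fin 4 → Bool) :
    hammingDist (fun i => xor (u i) (t i)) (fun i => xor (v i) (t i)) = hammingDist u v := by
  unfold hammingDist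
  apply congrArg
  apply Finset.filter_congr
  intro i _
  cases htt : t i <;> simp [htt]

lemma hamming_perm (π : Equiv.Perm (Fin 4)) (u v : Fin 4 → Bool) :
    hammingDist (u ∘ ⇑π) (v ∘ ⇑π) = hammingDist u v := by
  unfold hammingDist
  apply Finset.card_equiv π
  intro i
  simp [Function.comp]

lemma xor_adj (t u v : Fin 4 → Bool) (h : (Q 4).Adj u v) :
    (Q 4).Adj (fun i => xor (u i) (t i)) (fun i => xor (v i) (t i)) := by
  show hammingDist (fun i => xor (u i) (t i)) (fun i => xor (v i) (t i)) = 1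
  rw [hamming_xor]
  exact h

lemma perm_adj (π : Equiv.Perm (Fin 4)) (u v : Fin 4 → Bool) (h : (Q 4).Adj u v) :
    (Q 4).Adj (u ∘ ⇑π) (v ∘ ⇑π) := by
  show hammingDist (u ∘ ⇑π) (v ∘ ⇑π) = 1
  rw [hamming_perm]
  exact h

def xorE (t : Fin 4 → Bool) : (Fin 4 → Bool) ≃ (Fin 4 → Bool) where
  toFun x := fun i => xor (x i) (t i)
  invFun x := fun i => xor (x i) (t i)
  left_inv x := by
    funext i
    show xor (xor (x i) (t i)) (t i) = x i
    cases htt : t i <;> simp [htt]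
  right_inv x := by
    funext i
    show xor (xor (x i) (t i)) (t i) = x i
    cases htt : t i <;> simp [htt]

def permE (π : Equiv.Perm (Fin 4)) : (Fin 4 → Bool) ≃ (Fin 4 → Bool) where
  toFun x := x ∘ ⇑π
  invFun x := x ∘ ⇑π.symm
  left_inv x := by funext i; simp
  right_inv x := by funext i; simp

lemma W_map (e : (Fin 4 → Bool) ≃ (Fin 4 → Bool))
    (he : ∀ u v, (Q 4).Adj u v → (Q 4).Adj (e u) (e v)) (a b c d : Fin 4 → Bool)
    (hW : W a b c d) : W (e a) (e b) (e c) (e d) := by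
  intro x y hxa hxb hxc hxd hya hyb hyc hyd
  have key : ∀ v w : Fin 4 → Bool, v ≠ e w → e.symm v ≠ w := by
    intro v w h hh; exact h (by rw [← hh, e.apply_symm_apply])
  obtain ⟨p, hl, hs⟩ := hW (e.symm x) (e.symm y)
    (key x a hxa) (key x b hxb) (key x c hxc) (key x d hxd)
    (key y a hya) (key y b hyb) (key y c hyc) (key y d hyd)
  let hom : (Q 4) →g (Q 4) := ⟨⇑e, fun h => he _ _ h⟩
  refine ⟨(p.map hom).copy (e.apply_symm_apply x) (e.apply_symm_apply y), ?_, ?_⟩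
  · rwa [Walk.length_copy, Walk.length_map]
  · intro z hz
    rw [Walk.support_copy, Walk.support_map, List.mem_map] at hz
    obtain ⟨w, hw, rfl⟩ := hz
    obtain ⟨h1, h2, h3, h4⟩ := hs w hw
    exact ⟨fun hh => h1 (e.injective hh), fun hh => h2 (e.injective hh),
      fun hh => h3 (e.injective hh), fun hh => h4 (e.injective hh)⟩

lemma xorE_self (a : Fin 4 → Bool) : xorE a a = dec 0 := by
  funext i
  show xor (a i) (a i) = dec 0 i
  cases a i <;> simp [dec, Nat.zero_testBit]

set_option maxRecDepth 1000000 in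
set_option maxHeartbeats 16000000 in
lemma key_check : ∀ C D : Fin 16, nadjb C.val D.val = true → C.val ≠ 0 → C.val ≠ 1 →
    D.val ≠ 0 → D.val ≠ 1 → checkconf 0 1 C.val D.val = true := by decide

/-- W holds for every valid configuration. -/
lemma W_all (a b c d : Fin 4 → Bool) (hab : (Q 4).Adj a b) (hcd : (Q 4).Adj c d)
    (hca : c ≠ a) (hcb : c ≠ b) (hda : d ≠ a) (hdb : d ≠ b) : W a b c d := by
  -- normalize
  have hb0 : (Q 4).Adj (dec 0) (xorE a b) := by
    rw [← xorE_self a]; exact xor_adj a a b hab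
  obtain ⟨i, hswap1, hswap0⟩ := find_swap (xorE a b) hb0
  set σ : (Fin 4 → Bool) ≃ (Fin 4 → Bool) := (xorE a).trans (permE (Equiv.swap 0 i)) with hσ
  have hσadj : ∀ u v, (Q 4).Adj u v → (Q 4).Adj (σ u) (σ v) := by
    intro u v h
    exact perm_adj (Equiv.swap 0 i) _ _ (xor_adj a u v h)
  have hσsymmadj : ∀ u v, (Q 4).Adj u v → (Q 4).Adj (σ.symm u) (σ.symm v) := by
    intro u v h
    exact xor_adj a _ _ (perm_adj (Equiv.swap 0 i).symm u v h)
  have hσa : σ a = dec 0 := by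
    show permE (Equiv.swap 0 i) (xorE a a) = dec 0
    rw [xorE_self a]; exact hswap0
  have hσb : σ b = dec 1 := by
    show (xorE a b) ∘ ⇑(Equiv.swap 0 i) = dec 1
    exact hswap1
  -- numeric codes of the second edge
  set C : Fin 16 := ⟨enc (σ c), enc_lt _⟩ with hC
  set D : Fin 16 := ⟨enc (σ d), enc_lt _⟩ with hD
  have hdecC : dec C.val = σ c := dec_enc (σ c)
  have hdecD : dec D.val = σ d := dec_enc (σ d)
  have hne : ∀ (M : Fin 16) (u v : Fin 4 → Bool), dec M.val = σ u → σ v ≠ σ u →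
      (⟨enc (σ v), enc_lt _⟩ : Fin 16).val ≠ M.val := by
    intro M u v hM hne heq
    apply hne
    have h' : enc (σ v) = M.val := heq
    calc σ v = dec (enc (σ v)) := (dec_enc _).symm
    _ = dec M.val := by rw [h']
    _ = σ u := hM
  have h0 : dec (0 : Fin 16).val = σ a := by rw [hσa]; rfl
  have h1 : dec (1 : Fin 16).val = σ b := by rw [hσb]; rfl
  have hcheck := key_check C D
    (adj_nadjb (σ c) (σ d) (hσadj c d hcd))
    (hne 0 a c h0 (fun hh => hca (σ.injective hh)))
    (hne 1 b c h1 (fun hh => hcb (σ.injective hh)))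
    (hne 0 a d h0 (fun hh => hda (σ.injective hh)))
    (hne 1 b d h1 (fun hh => hdb (σ.injective hh)))
  have hW0 : W (σ a) (σ b) (σ c) (σ d) := by
    have := bridge 0 1 C D hcheck
    rwa [h0, h1, hdecC, hdecD] at this
  have hW1 := W_map σ.symm hσsymmadj _ _ _ _ hW0
  simpa using hW1

/-- transforming a walk avoiding vertices into a walk in the induced graph -/
lemma walk_induce {V : Type*} (G : SimpleGraph V) {s : Set V} : ∀ {x y : V} (p : G.Walk x y)
    (hs : ∀ z ∈ p.support, z ∈ s),
    ∃ q : (G.induce s).Walk ⟨x, hs x p.start_mem_support⟩ ⟨y, hs y p.end_mem_support⟩,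
      q.length = p.length := by
  intro x y p
  induction p with
  | nil => intro hs; exact ⟨.nil, rfl⟩
  | @cons u v w h p ih =>
    intro hs
    have hs' : ∀ z ∈ p.support, z ∈ s := fun z hz => hs z (by simp [hz])
    obtain ⟨q, hq⟩ := ih hs'
    exact ⟨Walk.cons (by exact h : (G.induce s).Adj ⟨u, _⟩ ⟨v, _⟩) q, congrArg (· + 1) hq⟩

theorem q4_minus_two_edges (S T : Set (Fin 4 → Bool))
    (hS : ∃ a b : Fin 4 → Bool, (Q 4).Adj a b ∧ S = {a, b})
    (hT : ∃ a b : Fin 4 → Bool, (Q 4).Adj a b ∧ T = {a, b})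
    (hd : Disjoint S T) :
    ((Q 4).induce (S ∪ T)ᶜ).Connected ∧
    ∀ x y, ((Q 4).induce (S ∪ T)ᶜ).dist x y ≤ 5 := by
  obtain ⟨a, b, hab, rfl⟩ := hS
  obtain ⟨c, d, hcd, rfl⟩ := hT
  have hdl := Set.disjoint_left.mp hd
  have h4 : ∀ u ∈ ({a, b} : Set (Fin 4 → Bool)), ∀ v ∈ ({c, d} : Set (Fin 4 → Bool)), v ≠ u :=
    fun u hu v hv h => hdl hu (h ▸ hv)
  have hca : c ≠ a := h4 a (by simp) c (by simp)
  have hcb : c ≠ b := h4 b (by simp) c (by simp)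
  have hda : d ≠ a := h4 a (by simp) d (by simp)
  have hdb : d ≠ b := h4 b (by simp) d (by simp)
  have hW : W a b c d := W_all a b c d hab hcd hca hcb hda hdb
  have hcompl : ∀ z : Fin 4 → Bool, z ≠ a → z ≠ b → z ≠ c → z ≠ d →
      z ∈ (({a, b} : Set (Fin 4 → Bool)) ∪ {c, d})ᶜ := by
    intro z h1 h2 h3 h5
    simp [h1, h2, h3, h5]
  have hcompl' : ∀ z : Fin 4 → Bool, z ∈ (({a, b} : Set (Fin 4 → Bool)) ∪ {c, d})ᶜ →
      z ≠ a ∧ z ≠ b ∧ z ≠ c ∧ z ≠ d := by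
    intro z hz
    simp only [Set.mem_compl_iff, Set.mem_union, Set.mem_insert_iff, Set.mem_singleton_iff,
      not_or] at hz
    exact ⟨hz.1.1, hz.1.2, hz.2.1, hz.2.2⟩
  have walkfn : ∀ x y : ↥((({a, b} : Set (Fin 4 → Bool)) ∪ {c, d})ᶜ),
      ∃ q : ((Q 4).induce (({a, b} : Set (Fin 4 → Bool)) ∪ {c, d})ᶜ).Walk x y, q.length ≤ 5 := by
    intro x y
    obtain ⟨h1, h2, h3, h5⟩ := hcompl' x.val x.prop
    obtain ⟨h6, h7, h8, h9⟩ := hcompl' y.val y.prop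
    obtain ⟨p, hl, hs⟩ := hW x.val y.val h1 h2 h3 h5 h6 h7 h8 h9
    have hsup : ∀ z ∈ p.support, z ∈ (({a, b} : Set (Fin 4 → Bool)) ∪ {c, d})ᶜ := by
      intro z hz
      obtain ⟨g1, g2, g3, g5⟩ := hs z hz
      exact hcompl z g1 g2 g3 g5
    obtain ⟨q, hq⟩ := walk_induce (Q 4) p hsup
    exact ⟨q, hq ▸ hl⟩
  have hne : Nonempty ↥((({a, b} : Set (Fin 4 → Bool)) ∪ {c, d})ᶜ) := by
    obtain ⟨X, hXa, hXb, hXc, hXd⟩ := exists_fifth ⟨enc a, enc_lt a⟩ ⟨enc b, enc_lt b⟩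
      ⟨enc c, enc_lt c⟩ ⟨enc d, enc_lt d⟩
    have key : ∀ (v : Fin 4 → Bool), X ≠ (⟨enc v, enc_lt v⟩ : Fin 16) → dec X.val ≠ v := by
      intro v hX h
      apply hX
      apply Fin.ext
      show X.val = enc v
      have := (enc_dec X).symm.trans (by rw [h] : enc (dec X.val) = enc v)
      exact this
    exact ⟨⟨dec X.val, hcompl _ (key a hXa) (key b hXb) (key c hXc) (key d hXd)⟩⟩
  constructor
  · rw [connected_iff]
    refine ⟨fun x y => ?_, hne⟩
    obtain ⟨q, -⟩ := walkfn x y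
    exact ⟨q⟩
  · intro x y
    obtain ⟨q, hq⟩ := walkfn x y
    exact le_trans (SimpleGraph.dist_le q) hq
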